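/- Let $l \ge 2$, $n \ge 1$ be integers and set $\bar\rho = \sum_{i=1}^l (l-i+\tfrac12)\epsilon_i \in \mathbb{R}^l$. For every root $\alpha$ of type $B_l$ and every integer $m \ge 1$ the quantity $N(\alpha,m) = \frac{2}{(\alpha,\alpha)}\left( m(n + l - \tfrac{1}{2}) + (\bar\rho,\alpha)\right)$ is not a nonpositive integer; moreover if $(\alpha,\alpha)=2$ and $m$ is even then $N(\alpha,m) \ge 2n$, if $(\alpha,\alpha)=2$ and $m$ is odd then $N(\alpha,m) \notin \mathbb{Z}$, and if $(\alpha,\alpha)=1$ then $N(\alpha,m) \ge 2n-1$. -/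
import Mathlib

noncomputable section

/-- Standard dot product on `ℝ^l`. -/
def dotR {l : ℕ} (u v : Fin l → ℝ) : ℝ := ∑ t, u t * v t

/-- The standard basis vector `ε_i` of `ℝ^l`. -/
def epsR {l : ℕ} (i : Fin l) : Fin l → ℝ := fun t => if t = i then 1 else 0

/-- Membership in the root system of type `B_l`. -/
def IsRootB {l : ℕ} (v : Fin l → ℝ) : Prop :=
  (∃ i, v = epsR i ∨ v = -epsR i) ∨
  ∃ i j, i ≠ j ∧ (v = epsR i + epsR j ∨ v = epsR i - epsR j ∨
    v = -epsR i + epsR j ∨ v = -epsR i - epsR j)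

/-- `ρ̄ = ∑ᵢ (l - i + 1/2) εᵢ` (0-indexed). -/
def rhoBarB (l : ℕ) : Fin l → ℝ := fun t => (l : ℝ) - (t : ℕ) - 1 / 2

/-- The quantity `N(α,m) = (2/(α,α)) (m(n + l - 1/2) + (ρ̄,α))`. -/
def NB (l n : ℕ) (α : Fin l → ℝ) (m : ℕ) : ℝ :=
  2 / dotR α α * ((m : ℝ) * ((n : ℝ) + (l : ℝ) - 1 / 2) + dotR (rhoBarB l) α)

end

section helpers

variable {l : ℕ}

lemma dotR_add_right (u v w : Fin l → ℝ) : dotR u (v + w) = dotR u v + dotR u w := by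
  simp [dotR, mul_add, Finset.sum_add_distrib]

lemma dotR_sub_right (u v w : Fin l → ℝ) : dotR u (v - w) = dotR u v - dotR u w := by
  simp [dotR, mul_sub, Finset.sum_sub_distrib]

lemma dotR_neg_right (u v : Fin l → ℝ) : dotR u (-v) = - dotR u v := by
  simp [dotR, Finset.sum_neg_distrib]

lemma dotR_comm (u v : Fin l → ℝ) : dotR u v = dotR v u := by
  simp [dotR, mul_comm]

lemma dotR_eps_right (u : Fin l → ℝ) (i : Fin l) : dotR u (epsR i) = u i := by
  simp [dotR, epsR, mul_ite, Finset.sum_ite_eq']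

lemma dotR_add_left (u v w : Fin l → ℝ) : dotR (u + v) w = dotR u w + dotR v w := by
  rw [dotR_comm, dotR_add_right, dotR_comm w u, dotR_comm w v]

lemma dotR_sub_left (u v w : Fin l → ℝ) : dotR (u - v) w = dotR u w - dotR v w := by
  rw [dotR_comm, dotR_sub_right, dotR_comm w u, dotR_comm w v]

lemma dotR_neg_left (u v : Fin l → ℝ) : dotR (-u) v = - dotR u v := by
  rw [dotR_comm, dotR_neg_right, dotR_comm]

lemma epsR_same (i : Fin l) : epsR i i = 1 := by simp [epsR]

lemma epsR_ne {i j : Fin l} (h : i ≠ j) : epsR j i = 0 := by simp [epsR, h]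

/-- Main helper for long roots. -/
lemma long_helper (l n m : ℕ) (hl : 2 ≤ l) (hn : 1 ≤ n) (hm : 1 ≤ m) (N : ℝ) (c : ℤ)
    (hc : 2 - 2 * (l : ℤ) ≤ c)
    (hN : N = (m : ℝ) * ((n : ℝ) + (l : ℝ) - 1 / 2) + (c : ℝ)) :
    (¬ ∃ z : ℤ, z ≤ 0 ∧ N = (z : ℝ)) ∧ (Even m → (2 * n : ℝ) ≤ N) ∧
    (Odd m → ¬ ∃ z : ℤ, N = (z : ℝ)) := by
  have hn' : (1 : ℝ) ≤ n := by exact_mod_cast hn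
  have hl' : (2 : ℝ) ≤ l := by exact_mod_cast hl
  have hc' : 2 - 2 * (l : ℝ) ≤ (c : ℝ) := by exact_mod_cast hc
  have heven : Even m → (2 * n : ℝ) + 1 ≤ N := by
    intro he
    have hm2 : 2 ≤ m := by
      rcases he with ⟨k, hk⟩; omega
    have hm2' : (2 : ℝ) ≤ m := by exact_mod_cast hm2
    rw [hN]
    nlinarith [hm2', hn', hl', hc']
  have hodd : Odd m → ¬ ∃ z : ℤ, N = (z : ℝ) := by
    rintro ⟨k, hk⟩ ⟨z, hz⟩
    subst hk
    rw [hN] at hz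
    have h2 : (2 * z : ℤ) = 2 * ((2 * k + 1) * ((n : ℤ) + l)) - (2 * k + 1) + 2 * c := by
      have h3 : ((2 * z : ℤ) : ℝ) = ((2 * ((2 * k + 1) * ((n : ℤ) + l)) - (2 * k + 1) + 2 * c : ℤ) : ℝ) := by
        push_cast at hz ⊢
        linear_combination -2 * hz
      exact_mod_cast h3
    generalize (2 * k + 1) * ((n : ℤ) + l) = C at h2
    omega
  refine ⟨?_, fun he => by linarith [heven he], hodd⟩
  rintro ⟨z, hz0, hz⟩
  rcases Nat.even_or_odd m with he | ho
  · have := heven he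
    have hz0' : (z : ℝ) ≤ 0 := by exact_mod_cast hz0
    nlinarith
  · exact hodd ho ⟨z, hz⟩

end helpers

/-- For every root `α` of `B_l` and every `m ≥ 1`, `N(α,m)` is not a nonpositive integer;
moreover if `(α,α)=2` and `m` even then `N(α,m) ≥ 2n`, if `(α,α)=2` and `m` odd then
`N(α,m) ∉ ℤ`, and if `(α,α)=1` then `N(α,m) ≥ 2n-1`. -/
theorem stmt_10 (l n : ℕ) (hl : 2 ≤ l) (hn : 1 ≤ n) (α : Fin l → ℝ) (hα : IsRootB α)
    (m : ℕ) (hm : 1 ≤ m) :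
    (¬ ∃ z : ℤ, z ≤ 0 ∧ NB l n α m = (z : ℝ)) ∧
    (dotR α α = 2 → Even m → (2 * n : ℝ) ≤ NB l n α m) ∧
    (dotR α α = 2 → Odd m → ¬ ∃ z : ℤ, NB l n α m = (z : ℝ)) ∧
    (dotR α α = 1 → (2 * n : ℝ) - 1 ≤ NB l n α m) := by
  have hn' : (1 : ℝ) ≤ n := by exact_mod_cast hn
  have hl' : (2 : ℝ) ≤ l := by exact_mod_cast hl
  have hm' : (1 : ℝ) ≤ m := by exact_mod_cast hm
  rcases hα with ⟨i, hi | hi⟩ | ⟨i, j, hij, hij4⟩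
  · -- α = ε_i
    subst hi
    have hd : dotR (epsR i) (epsR i) = 1 := by
      rw [dotR_eps_right, epsR_same]
    have hi' : (i : ℝ) + 1 ≤ l := by exact_mod_cast i.isLt
    have hN : NB l n (epsR i) m =
        2 * ((m : ℝ) * ((n : ℝ) + (l : ℝ) - 1 / 2) + ((l : ℝ) - (i : ℕ) - 1 / 2)) := by
      rw [NB, hd, dotR_eps_right, rhoBarB]; norm_num
    have hineq : (2 * n : ℝ) ≤ NB l n (epsR i) m := by
      rw [hN]; nlinarith [hm', hn', hl', hi', (Nat.cast_nonneg i.1 : (0:ℝ) ≤ i.1)]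
    refine ⟨?_, fun h2 => absurd (hd.symm.trans h2) (by norm_num),
      fun h2 => absurd (hd.symm.trans h2) (by norm_num), fun _ => by linarith⟩
    rintro ⟨z, hz0, hz⟩
    have hz0' : (z : ℝ) ≤ 0 := by exact_mod_cast hz0
    nlinarith
  · -- α = -ε_i
    subst hi
    have hd : dotR (-epsR i) (-epsR i) = 1 := by
      rw [dotR_neg_left, dotR_neg_right, dotR_eps_right, epsR_same]; ring
    have hi' : (i : ℝ) + 1 ≤ l := by exact_mod_cast i.isLt
    have hN : NB l n (-epsR i) m =
        2 * ((m : ℝ) * ((n : ℝ) + (l : ℝ) - 1 / 2) - ((l : ℝ) - (i : ℕ) - 1 / 2)) := by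
      rw [NB, hd, dotR_neg_right, dotR_eps_right, rhoBarB]; norm_num; ring
    have hineq : (2 * n : ℝ) ≤ NB l n (-epsR i) m := by
      rw [hN]; nlinarith [hm', hn', hl', hi', (Nat.cast_nonneg i.1 : (0:ℝ) ≤ i.1)]
    refine ⟨?_, fun h2 => absurd (hd.symm.trans h2) (by norm_num),
      fun h2 => absurd (hd.symm.trans h2) (by norm_num), fun _ => by linarith⟩
    rintro ⟨z, hz0, hz⟩
    have hz0' : (z : ℝ) ≤ 0 := by exact_mod_cast hz0
    nlinarith
  · -- long roots
    have hiL : (i : ℤ) < l := by exact_mod_cast i.isLt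
    have hjL : (j : ℤ) < l := by exact_mod_cast j.isLt
    have hij' : (i : ℤ) ≠ (j : ℤ) := by
      simpa [Fin.val_inj] using hij
    have key : ∀ (c : ℤ), 2 - 2 * (l : ℤ) ≤ c →
        NB l n α m = (m : ℝ) * ((n : ℝ) + (l : ℝ) - 1 / 2) + (c : ℝ) →
        dotR α α = 2 →
        (¬ ∃ z : ℤ, z ≤ 0 ∧ NB l n α m = (z : ℝ)) ∧
        (dotR α α = 2 → Even m → (2 * n : ℝ) ≤ NB l n α m) ∧
        (dotR α α = 2 → Odd m → ¬ ∃ z : ℤ, NB l n α m = (z : ℝ)) ∧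
        (dotR α α = 1 → (2 * n : ℝ) - 1 ≤ NB l n α m) := by
      intro c hc hN hd
      obtain ⟨h1, h2, h3⟩ := long_helper l n m hl hn hm _ c hc hN
      exact ⟨h1, fun _ => h2, fun _ => h3,
        fun h1' => absurd (hd.symm.trans h1') (by norm_num)⟩
    rcases hij4 with h | h | h | h <;> subst h
    · have hd : dotR (epsR i + epsR j) (epsR i + epsR j) = 2 := by
        simp only [dotR_add_left, dotR_add_right, dotR_eps_right, Pi.add_apply,
          epsR_same, epsR_ne hij, epsR_ne hij.symm]
        norm_num
      refine key (2 * l - i - j - 1) (by omega) ?_ hd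
      rw [NB, hd, dotR_add_right, dotR_eps_right, dotR_eps_right]
      simp only [rhoBarB]
      push_cast
      ring
    · have hd : dotR (epsR i - epsR j) (epsR i - epsR j) = 2 := by
        simp only [dotR_sub_left, dotR_sub_right, dotR_eps_right, Pi.sub_apply,
          epsR_same, epsR_ne hij, epsR_ne hij.symm]
        norm_num
      refine key ((j : ℤ) - i) (by omega) ?_ hd
      rw [NB, hd, dotR_sub_right, dotR_eps_right, dotR_eps_right]
      simp only [rhoBarB]
      push_cast
      ring
    · have hd : dotR (-epsR i + epsR j) (-epsR i + epsR j) = 2 := by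
        simp only [dotR_add_left, dotR_add_right, dotR_neg_left, dotR_neg_right,
          dotR_eps_right, Pi.add_apply, Pi.neg_apply,
          epsR_same, epsR_ne hij, epsR_ne hij.symm]
        norm_num
      refine key ((i : ℤ) - j) (by omega) ?_ hd
      rw [NB, hd, dotR_add_right, dotR_neg_right, dotR_eps_right, dotR_eps_right]
      simp only [rhoBarB]
      push_cast
      ring
    · have hd : dotR (-epsR i - epsR j) (-epsR i - epsR j) = 2 := by
        simp only [dotR_sub_left, dotR_sub_right, dotR_neg_left, dotR_neg_right,
          dotR_eps_right, Pi.sub_apply, Pi.neg_apply,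
          epsR_same, epsR_ne hij, epsR_ne hij.symm]
        norm_num
      refine key (-(2 * l - i - j - 1)) (by omega) ?_ hd
      rw [NB, hd, dotR_sub_right, dotR_neg_right, dotR_eps_right, dotR_eps_right]
      simp only [rhoBarB]
      push_cast
      ring
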